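/- Let r > 0, σ₀ > 0, K > 0 and let A ⊆ (−r, 0]. Consider functions φ : [−r, 0] → ℝ that possess a left-hand limit φ(t−) := lim_{s→t, s<t} φ(s) at every point t ∈ (−r, 0], and define σ(φ) := σ₀ + min(K, sup_{t∈A} |φ(t) − φ(t−)|). Then for any two such functions φ, ψ: |σ(φ) − σ(ψ)| ≤ 2·sup_{s∈[−r,0]} |φ(s) − ψ(s)|; i.e. the jump-size functional σ satisfies the uniform Lipschitz condition with constant 2 in the supremum norm. -/

import Mathlib

open Filter

private lemma aux13 (r : ℝ) (hr : 0 < r)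
    (A : Set ℝ) (hA : A ⊆ Set.Ioc (-r) (0 : ℝ))
    (φ ψ φL ψL : ℝ → ℝ)
    (hφ : ∀ t ∈ Set.Ioc (-r) (0 : ℝ),
      Tendsto φ (nhdsWithin t (Set.Iio t)) (nhds (φL t)))
    (hψ : ∀ t ∈ Set.Ioc (-r) (0 : ℝ),
      Tendsto ψ (nhdsWithin t (Set.Iio t)) (nhds (ψL t)))
    (hMtop : (⨆ s ∈ Set.Icc (-r) (0 : ℝ), ENNReal.ofReal |φ s - ψ s|) ≠ ⊤) :
    (⨆ t ∈ A, ENNReal.ofReal |φ t - φL t|) ≤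
      (⨆ t ∈ A, ENNReal.ofReal |ψ t - ψL t|) +
        2 * ⨆ s ∈ Set.Icc (-r) (0 : ℝ), ENNReal.ofReal |φ s - ψ s| := by
  set M : ENNReal := ⨆ s ∈ Set.Icc (-r) (0 : ℝ), ENNReal.ofReal |φ s - ψ s| with hM
  set c := M.toReal with hc
  have hbound : ∀ s ∈ Set.Icc (-r) (0 : ℝ), |φ s - ψ s| ≤ c := by
    intro s hs
    have h1 : ENNReal.ofReal |φ s - ψ s| ≤ M := hM ▸ le_biSup (fun s => ENNReal.ofReal |φ s - ψ s|) hs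
    exact (ENNReal.ofReal_le_iff_le_toReal hMtop).mp h1
  have hL : ∀ t ∈ A, |φL t - ψL t| ≤ c := by
    intro t ht
    have htI := hA ht
    have htend : Tendsto (fun s => |φ s - ψ s|) (nhdsWithin t (Set.Iio t))
        (nhds |φL t - ψL t|) := ((hφ t htI).sub (hψ t htI)).abs
    have hev : ∀ᶠ s in nhdsWithin t (Set.Iio t), |φ s - ψ s| ≤ c := by
      have hmem : Set.Ioi (-r) ∈ nhdsWithin t (Set.Iio t) :=
        nhdsWithin_le_nhds (Ioi_mem_nhds (by linarith [htI.1]))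
      filter_upwards [hmem, self_mem_nhdsWithin] with s hs1 hs2
      exact hbound s ⟨le_of_lt hs1, le_trans (le_of_lt hs2) htI.2⟩
    exact le_of_tendsto htend hev
  refine iSup₂_le fun t ht => ?_
  have hb1 := hbound t (Set.Ioc_subset_Icc_self (hA ht))
  have hb2 := hL t ht
  have h1 : |φ t - φL t| ≤ |ψ t - ψL t| + 2 * c := by
    have htri : |φ t - φL t| ≤ |φ t - ψ t| + |ψ t - ψL t| + |ψL t - φL t| := by
      calc |φ t - φL t| = |(φ t - ψ t) + (ψ t - ψL t) + (ψL t - φL t)| := by ring_nf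
        _ ≤ |(φ t - ψ t) + (ψ t - ψL t)| + |ψL t - φL t| := abs_add_le _ _
        _ ≤ |φ t - ψ t| + |ψ t - ψL t| + |ψL t - φL t| :=
            add_le_add (abs_add_le _ _) le_rfl
    have h3 : |ψL t - φL t| ≤ c := by rw [abs_sub_comm]; exact hb2
    linarith
  calc ENNReal.ofReal |φ t - φL t| ≤ ENNReal.ofReal (|ψ t - ψL t| + 2 * c) :=
        ENNReal.ofReal_le_ofReal h1
    _ ≤ ENNReal.ofReal |ψ t - ψL t| + ENNReal.ofReal (2 * c) := ENNReal.ofReal_add_le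
    _ = ENNReal.ofReal |ψ t - ψL t| + 2 * M := by
        rw [ENNReal.ofReal_mul (by norm_num), hc, ENNReal.ofReal_toReal hMtop]
        norm_num
    _ ≤ (⨆ t ∈ A, ENNReal.ofReal |ψ t - ψL t|) + 2 * M :=
        add_le_add (le_biSup (fun t => ENNReal.ofReal |ψ t - ψL t|) ht) le_rfl

theorem stmt_13 (r σ₀ K : ℝ) (hr : 0 < r) (hσ₀ : 0 < σ₀) (hK : 0 < K)
    (A : Set ℝ) (hA : A ⊆ Set.Ioc (-r) (0 : ℝ))
    (φ ψ φL ψL : ℝ → ℝ)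
    (hφ : ∀ t ∈ Set.Ioc (-r) (0 : ℝ),
      Tendsto φ (nhdsWithin t (Set.Iio t)) (nhds (φL t)))
    (hψ : ∀ t ∈ Set.Ioc (-r) (0 : ℝ),
      Tendsto ψ (nhdsWithin t (Set.Iio t)) (nhds (ψL t))) :
    ENNReal.ofReal
        |(σ₀ + (min (ENNReal.ofReal K) (⨆ t ∈ A, ENNReal.ofReal |φ t - φL t|)).toReal) -
         (σ₀ + (min (ENNReal.ofReal K) (⨆ t ∈ A, ENNReal.ofReal |ψ t - ψL t|)).toReal)| ≤
      2 * ⨆ s ∈ Set.Icc (-r) (0 : ℝ), ENNReal.ofReal |φ s - ψ s| := by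
  set M : ENNReal := ⨆ s ∈ Set.Icc (-r) (0 : ℝ), ENNReal.ofReal |φ s - ψ s| with hM
  by_cases hMtop : M = ⊤
  · rw [hMtop]; simp
  have hMsymm : M = ⨆ s ∈ Set.Icc (-r) (0 : ℝ), ENNReal.ofReal |ψ s - φ s| := by
    simp only [hM, abs_sub_comm]
  have hXY := aux13 r hr A hA φ ψ φL ψL hφ hψ hMtop
  have hYX := aux13 r hr A hA ψ φ ψL φL hψ hφ (by rw [← hMsymm]; exact hMtop)
  rw [← hMsymm] at hYX
  set K' := ENNReal.ofReal K with hK'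
  set X := ⨆ t ∈ A, ENNReal.ofReal |φ t - φL t| with hX
  set Y := ⨆ t ∈ A, ENNReal.ofReal |ψ t - ψL t| with hY
  have hmin : ∀ U V : ENNReal, U ≤ V + 2 * M → min K' U ≤ min K' V + 2 * M := by
    intro U V h
    calc min K' U ≤ min K' (V + 2 * M) := min_le_min le_rfl h
      _ ≤ min (K' + 2 * M) (V + 2 * M) := min_le_min (le_add_right le_rfl) le_rfl
      _ = min K' V + 2 * M := min_add_add_right _ _ _
  have h1 := hmin X Y hXY
  have h2 := hmin Y X hYX
  have hfinX : min K' X ≠ ⊤ := ne_top_of_le_ne_top ENNReal.ofReal_ne_top (min_le_left _ _)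
  have hfinY : min K' Y ≠ ⊤ := ne_top_of_le_ne_top ENNReal.ofReal_ne_top (min_le_left _ _)
  have hfinM : 2 * M ≠ ⊤ := ENNReal.mul_ne_top (by norm_num) hMtop
  have ht1 : (min K' X).toReal ≤ (min K' Y).toReal + (2 * M).toReal := by
    rw [← ENNReal.toReal_add hfinY hfinM]
    exact ENNReal.toReal_mono (ENNReal.add_ne_top.mpr ⟨hfinY, hfinM⟩) h1
  have ht2 : (min K' Y).toReal ≤ (min K' X).toReal + (2 * M).toReal := by
    rw [← ENNReal.toReal_add hfinX hfinM]
    exact ENNReal.toReal_mono (ENNReal.add_ne_top.mpr ⟨hfinX, hfinM⟩) h2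
  have habs : |(σ₀ + (min K' X).toReal) - (σ₀ + (min K' Y).toReal)| ≤ (2 * M).toReal := by
    rw [abs_le]; constructor <;> linarith
  calc ENNReal.ofReal |(σ₀ + (min K' X).toReal) - (σ₀ + (min K' Y).toReal)|
      ≤ ENNReal.ofReal (2 * M).toReal := ENNReal.ofReal_le_ofReal habs
    _ = 2 * M := ENNReal.ofReal_toReal hfinM
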